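/- Let α_{n,i} : [n] → [n+1] denote the unique strictly increasing map whose image does not contain i. The kernel of the surjective algebra homomorphism k𝒞₊ → k𝒞 induced by π_a (sending α to π_a(α), i.e., i ↦ α(i+1) − 1) is generated, as a left ideal, by the elements α_{m,1} − α_{m,2} for m ≥ 1. -/

import Mathlib

/-- Morphisms of the category with objects `[o m]` and strictly increasing maps;
`o = fun m => m + 1` gives `𝒞₊`, and `o = id` gives `𝒞`. -/
def MorF (o : ℕ → ℕ) : Type := Σ m n : ℕ, Fin (o m) ↪o Fin (o n)

variable {o : ℕ → ℕ} (k : Type) [CommRing k]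

/-- Product of two basis elements of the category algebra. -/
noncomputable def mulB (a b : MorF o) : MorF o →₀ k :=
  if h : b.2.1 = a.1 then
    Finsupp.single ⟨b.1, a.2.1, (h ▸ b.2.2 : Fin (o b.1) ↪o Fin (o a.1)).trans a.2.2⟩ 1
  else 0

/-- The multiplication of the category algebra, extended bilinearly. -/
noncomputable def algMul (x y : MorF o →₀ k) : MorF o →₀ k :=
  x.sum fun a c => y.sum fun b d => (c * d) • mulB k a b

/-- `π_a` on a strictly increasing map `[m+1] → [n+1]`: `i ↦ α(i+1) - 1`. -/
def piAEmb {m n : ℕ} (f : Fin (m + 1) ↪o Fin (n + 1)) : Fin m ↪o Fin n :=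
  OrderEmbedding.ofStrictMono
    (fun i => (f i.succ).pred (Fin.pos_iff_ne_zero.mp
      (lt_of_le_of_lt (Fin.zero_le _) (f.strictMono (Fin.succ_pos i)))))
    (by
      intro i j h
      have h1 := Fin.lt_def.mp (f.strictMono (Fin.succ_lt_succ_iff.mpr h))
      have h2 := Fin.lt_def.mp (f.strictMono (Fin.succ_pos i))
      simp only [Fin.lt_def, Fin.coe_pred]
      omega)

/-- The functor `π_a` on morphisms of `𝒞₊`. -/
def piATotal (a : MorF (fun m => m + 1)) : MorF id := ⟨a.1, a.2.1, piAEmb a.2.2⟩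

/-- `α_{m,i} : [m] → [m+1]`, the unique strictly increasing map omitting `i` from its
image (`Fin.succAbove` in 0-indexed notation), as a basis element of `k𝒞₊`. -/
def alphaMor (m : ℕ) (i : Fin (m + 2)) : MorF (fun m => m + 1) :=
  ⟨m, m + 1, Fin.succAboveOrderEmb i⟩

-- AUX
section Aux
variable {k}

lemma oeExt {m n : ℕ} {f g : Fin m ↪o Fin n} (h : ∀ i, f i = g i) : f = g :=
  DFunLike.ext f g h

lemma piAEmb_succ_apply {m n : ℕ} (f : Fin (m+1) ↪o Fin (n+1)) (i : Fin m) :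
    (piAEmb f i).succ = f i.succ := by
  exact Fin.succ_pred (f i.succ) (Fin.pos_iff_ne_zero.mp
    (lt_of_le_of_lt (Fin.zero_le _) (f.strictMono (Fin.succ_pos i))))

def liftEmb {m n : ℕ} (h : Fin m ↪o Fin n) : Fin (m+1) ↪o Fin (n+1) :=
  OrderEmbedding.ofStrictMono (fun i => Fin.cases 0 (fun j => (h j).succ) i) (by
    intro i j hij
    induction i using Fin.cases with
    | zero =>
      induction j using Fin.cases with
      | zero => exact absurd hij (lt_irrefl _)
      | succ j => exact Fin.succ_pos _
    | succ i =>
      induction j using Fin.cases with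
      | zero => exact absurd hij (Fin.not_lt.mpr (Fin.zero_le _))
      | succ j => exact Fin.succ_lt_succ_iff.mpr (h.strictMono (Fin.succ_lt_succ_iff.mp hij)))

@[simp] lemma liftEmb_zero {m n : ℕ} (h : Fin m ↪o Fin n) : liftEmb h 0 = 0 := by
  rfl

@[simp] lemma liftEmb_succ {m n : ℕ} (h : Fin m ↪o Fin n) (j : Fin m) :
    liftEmb h j.succ = (h j).succ := by
  rfl

lemma piAEmb_liftEmb {m n : ℕ} (h : Fin m ↪o Fin n) : piAEmb (liftEmb h) = h := by
  refine oeExt fun i => ?_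
  have := piAEmb_succ_apply (liftEmb h) i
  rw [liftEmb_succ] at this
  exact Fin.succ_injective _ this

lemma liftEmb_piAEmb {m n : ℕ} {f : Fin (m+1) ↪o Fin (n+1)} (h0 : f 0 = 0) :
    liftEmb (piAEmb f) = f := by
  refine oeExt fun i => ?_
  induction i using Fin.cases with
  | zero => simpa using h0.symm
  | succ i => rw [liftEmb_succ, piAEmb_succ_apply]
end Aux

def sect (x : MorF id) : MorF (fun m => m + 1) := ⟨x.1, x.2.1, liftEmb x.2.2⟩

lemma piATotal_sect (x : MorF id) : piATotal (sect x) = x := by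
  obtain ⟨m, n, h⟩ := x
  show (⟨m, n, piAEmb (liftEmb h)⟩ : MorF id) = ⟨m, n, h⟩
  rw [piAEmb_liftEmb]

lemma sect_piATotal_of_zero {m n : ℕ} (f : Fin (m+1) ↪o Fin (n+1)) (h0 : f 0 = 0) :
    sect (piATotal ⟨m, n, f⟩) = ⟨m, n, f⟩ := by
  show (⟨m, n, liftEmb (piAEmb f)⟩ : MorF (fun m => m + 1)) = ⟨m, n, f⟩
  rw [liftEmb_piAEmb h0]

section Aux2
variable {k}

lemma algMul_sub (x y z : MorF o →₀ k) :
    algMul k x (y - z) = algMul k x y - algMul k x z := by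
  unfold algMul
  rw [← Finsupp.sum_sub]
  refine Finsupp.sum_congr fun a _ => ?_
  exact Finsupp.sum_sub_index (fun b d₁ d₂ => by rw [mul_sub, sub_smul])

lemma algMul_single_single (a b : MorF o) :
    algMul k (Finsupp.single a (1 : k)) (Finsupp.single b 1) = mulB k a b := by
  unfold algMul
  rw [Finsupp.sum_single_index, Finsupp.sum_single_index]
  · rw [mul_one, one_smul]
  · rw [mul_zero, zero_smul]
  · simp

lemma algMul_single_right (y : MorF o →₀ k) (b : MorF o) :
    algMul k y (Finsupp.single b 1) = y.sum fun a c => c • mulB k a b := by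
  unfold algMul
  refine Finsupp.sum_congr fun a _ => ?_
  rw [Finsupp.sum_single_index]
  · rw [mul_one]
  · rw [mul_zero, zero_smul]

lemma succAbove_zero_one {m : ℕ} (j : Fin m) :
    Fin.succAbove (0 : Fin (m+2)) j.succ = Fin.succAbove (1 : Fin (m+2)) j.succ := by
  rw [Fin.zero_succAbove, Fin.succAbove_of_le_castSucc]
  rw [Fin.le_def]
  simp

lemma piAEmb_alpha_comp {m n : ℕ} (g : Fin (m+2) ↪o Fin (n+1)) :
    piAEmb ((Fin.succAboveOrderEmb (0 : Fin (m+2))).trans g)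
      = piAEmb ((Fin.succAboveOrderEmb (1 : Fin (m+2))).trans g) := by
  refine oeExt fun i => ?_
  apply Fin.succ_injective
  rw [piAEmb_succ_apply, piAEmb_succ_apply]
  show g (Fin.succAbove 0 i.succ) = g (Fin.succAbove 1 i.succ)
  rw [succAbove_zero_one]

lemma piATotal_alpha_eq (m : ℕ) : piATotal (alphaMor m 0) = piATotal (alphaMor m 1) := by
  show (⟨m, m+1, piAEmb (Fin.succAboveOrderEmb 0)⟩ : MorF id)
      = ⟨m, m+1, piAEmb (Fin.succAboveOrderEmb 1)⟩
  refine congrArg (fun e : Fin m ↪o Fin (m+1) => (⟨m, m+1, e⟩ : MorF id)) ?_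
  refine oeExt fun i => ?_
  apply Fin.succ_injective
  rw [piAEmb_succ_apply, piAEmb_succ_apply]
  exact succAbove_zero_one i

end Aux2

section Aux3
variable {k}

lemma mapDomain_mulB_alpha (a : MorF (fun m => m + 1)) (m : ℕ) :
    Finsupp.mapDomain piATotal (mulB k a (alphaMor m 0))
      = Finsupp.mapDomain piATotal (mulB k a (alphaMor m 1)) := by
  obtain ⟨a1, a2, g⟩ := a
  by_cases h : m + 1 = a1
  · subst h
    simp only [mulB, alphaMor]
    erw [dif_pos rfl, dif_pos rfl, Finsupp.mapDomain_single, Finsupp.mapDomain_single]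
    refine congrArg (fun z => Finsupp.single z (1:k)) ?_
    exact congrArg (fun e : Fin m ↪o Fin a2 => (⟨m, a2, e⟩ : MorF id)) (piAEmb_alpha_comp g)
  · simp only [mulB, alphaMor]
    erw [dif_neg h, dif_neg h]

lemma gen2_ker (y : MorF (fun m => m + 1) →₀ k) (m : ℕ) :
    Finsupp.lmapDomain k k piATotal
      (algMul k y (Finsupp.single (alphaMor m 0) 1 - Finsupp.single (alphaMor m 1) 1)) = 0 := by
  rw [algMul_sub, map_sub, algMul_single_right, algMul_single_right,
    map_finsuppSum, map_finsuppSum]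
  rw [sub_eq_zero]
  refine Finsupp.sum_congr fun a _ => ?_
  rw [map_smul, map_smul, Finsupp.lmapDomain_apply, Finsupp.lmapDomain_apply,
    mapDomain_mulB_alpha]

end Aux3

section Aux4
variable {k}

/-- The generating set from the statement. -/
def genSet (k : Type) [CommRing k] : Set (MorF (fun m => m + 1) →₀ k) :=
  ({x | ∃ m : ℕ, x = Finsupp.single (alphaMor m 0) (1 : k) -
      Finsupp.single (alphaMor m 1) 1} ∪
   {x | ∃ (y : MorF (fun m => m + 1) →₀ k) (m : ℕ),
      x = algMul k y (Finsupp.single (alphaMor m 0) 1 -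
        Finsupp.single (alphaMor m 1) 1)})

lemma key_mem (a : MorF (fun m => m + 1)) :
    Finsupp.single a (1 : k) - Finsupp.single (sect (piATotal a)) 1 ∈
      Submodule.span k (genSet k) := by
  obtain ⟨m, n, f⟩ := a
  by_cases h0 : f 0 = 0
  · rw [sect_piATotal_of_zero f h0, sub_self]
    exact Submodule.zero_mem _
  · have hf0 : (0 : Fin (n+1)) < f 0 := Fin.pos_iff_ne_zero.mpr h0
    set bEmb : Fin (m+2) ↪o Fin (n+1) := OrderEmbedding.ofStrictMono
      (fun i => Fin.cases 0 (fun j => f j) i) (by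
        intro i j hij
        induction i using Fin.cases with
        | zero =>
          induction j using Fin.cases with
          | zero => exact absurd hij (lt_irrefl _)
          | succ j => simpa using lt_of_lt_of_le hf0 (f.monotone (Fin.zero_le _))
        | succ i =>
          induction j using Fin.cases with
          | zero => exact absurd hij (Fin.not_lt.mpr (Fin.zero_le _))
          | succ j => simpa using f.strictMono (Fin.succ_lt_succ_iff.mp hij)) with hbdef
    have hb0 : bEmb 0 = 0 := by rfl
    have hbs : ∀ j : Fin (m+1), bEmb j.succ = f j := by intro j; rfl
    have hcomp0 : (⟨m, n, (Fin.succAboveOrderEmb (0 : Fin (m+2))).trans bEmb⟩ :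
        MorF (fun m => m + 1)) = ⟨m, n, f⟩ := by
      refine congrArg (fun e : Fin (m+1) ↪o Fin (n+1) =>
        (⟨m, n, e⟩ : MorF (fun m => m + 1))) ?_
      refine oeExt fun j => ?_
      show bEmb (Fin.succAbove 0 j) = f j
      rw [Fin.zero_succAbove, hbs]
    have hcomp1 : (⟨m, n, (Fin.succAboveOrderEmb (1 : Fin (m+2))).trans bEmb⟩ :
        MorF (fun m => m + 1)) = sect (piATotal ⟨m, n, f⟩) := by
      refine congrArg (fun e : Fin (m+1) ↪o Fin (n+1) =>
        (⟨m, n, e⟩ : MorF (fun m => m + 1))) ?_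
      refine oeExt fun j => ?_
      show bEmb (Fin.succAbove 1 j) = liftEmb (piAEmb f) j
      induction j using Fin.cases with
      | zero =>
        rw [Fin.succAbove_of_castSucc_lt, liftEmb_zero]
        · show bEmb 0 = 0
          exact hb0
        · simp
      | succ j =>
        rw [Fin.succAbove_of_le_castSucc, liftEmb_succ]
        · rw [hbs]
          exact (piAEmb_succ_apply f j).symm
        · rw [Fin.le_def]
          simp
    refine Submodule.subset_span (Set.mem_union_right _ ?_)
    refine ⟨Finsupp.single (⟨m+1, n, bEmb⟩ : MorF (fun m => m + 1)) (1:k), m, ?_⟩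
    rw [algMul_sub, algMul_single_single (k := k) (⟨m+1, n, bEmb⟩ : MorF (fun m => m + 1)),
      algMul_single_single (k := k) (⟨m+1, n, bEmb⟩ : MorF (fun m => m + 1))]
    simp only [mulB, alphaMor]
    erw [dif_pos rfl, dif_pos rfl, hcomp0, hcomp1]

end Aux4

/-- the kernel of the surjective algebra homomorphism `k𝒞₊ → k𝒞`
induced by the functor `π_a` is generated, as a left ideal, by the elements
`α_{m,1} - α_{m,2}`, `m ≥ 1`. -/
theorem ker_piA_alg_hom :
    LinearMap.ker (Finsupp.lmapDomain k k (piATotal) :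
        (MorF (fun m => m + 1) →₀ k) →ₗ[k] (MorF id →₀ k)) =
      Submodule.span k
        ({x | ∃ m : ℕ, x = Finsupp.single (alphaMor m 0) (1 : k) -
            Finsupp.single (alphaMor m 1) 1} ∪
         {x | ∃ (y : MorF (fun m => m + 1) →₀ k) (m : ℕ),
            x = algMul k y (Finsupp.single (alphaMor m 0) 1 -
              Finsupp.single (alphaMor m 1) 1)}) := by
  apply le_antisymm
  · intro x hx
    rw [LinearMap.mem_ker, Finsupp.lmapDomain_apply] at hx
    have hTx : Finsupp.mapDomain (fun a => sect (piATotal a)) x = 0 := by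
      rw [show (fun a => sect (piATotal a)) = sect ∘ piATotal from rfl,
        Finsupp.mapDomain_comp, hx, Finsupp.mapDomain_zero]
    have hxx : x = x.sum fun a c =>
        Finsupp.single a c - Finsupp.single (sect (piATotal a)) c := by
      rw [Finsupp.sum_sub, Finsupp.sum_single]
      rw [show (x.sum fun a c => Finsupp.single (sect (piATotal a)) c)
          = Finsupp.mapDomain (fun a => sect (piATotal a)) x from rfl, hTx, sub_zero]
    rw [hxx, Finsupp.sum]
    refine Submodule.sum_mem _ fun a _ => ?_
    have h2 : Finsupp.single a (x a) - Finsupp.single (sect (piATotal a)) (x a)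
        = (x a) • (Finsupp.single a (1:k) - Finsupp.single (sect (piATotal a)) 1) := by
      rw [smul_sub, Finsupp.smul_single, Finsupp.smul_single, smul_eq_mul, mul_one]
    rw [h2]
    exact Submodule.smul_mem _ _ (key_mem a)
  · rw [Submodule.span_le]
    rintro x (⟨m, rfl⟩ | ⟨y, m, rfl⟩)
    · rw [SetLike.mem_coe, LinearMap.mem_ker, map_sub, Finsupp.lmapDomain_apply,
        Finsupp.lmapDomain_apply, Finsupp.mapDomain_single, Finsupp.mapDomain_single,
        piATotal_alpha_eq, sub_self]
    · rw [SetLike.mem_coe, LinearMap.mem_ker]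
      exact gen2_ker y m
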